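/- Let ρ be a risk measure (positively homogeneous and translation invariant), let μ∈ℝ and σ>0, and let 𝓛 be a set of random variables each having mean μ and standard deviation σ, with X₀∈𝓛. Write X̃ = (X-μ)/σ for the standardized version of X and 𝓛̃ = {X̃ : X∈𝓛}. If ρ̄(𝓛) and ρ_(𝓛) are finite with ρ_(𝓛)≠ρ̄(𝓛) and ρ(X₀)>0, ρ(X̃₀)>0, then RM(X₀,𝓛) = RM(X̃₀,𝓛̃). -/

import Mathlib

open MeasureTheory ProbabilityTheory

/-- If `ρ` is a positively homogeneous and translation invariant risk measure,
`𝓛` a set of random variables each with mean `μ` and standard deviation `σ`,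
`X₀ ∈ 𝓛`, the extremal values of `ρ` over `𝓛` are finite and distinct, and
`ρ(X₀) > 0`, `ρ(X̃₀) > 0`, then the relative measure of model risk satisfies
`RM(X₀, 𝓛) = RM(X̃₀, 𝓛̃)`, where `X̃ = (X - μ)/σ` is the standardized version. -/
theorem relative_measure_standardization {Ω : Type*} [MeasureSpace Ω]
    [IsProbabilityMeasure (ℙ : Measure Ω)]
    (ρ : (Ω → ℝ) → ℝ)
    (hhom : ∀ a : ℝ, 0 ≤ a → ∀ X : Ω → ℝ, ρ (fun ω => a * X ω) = a * ρ X)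
    (htrans : ∀ b : ℝ, ∀ X : Ω → ℝ, ρ (fun ω => X ω + b) = ρ X - b)
    (μ σ : ℝ) (hσ : 0 < σ)
    (L : Set (Ω → ℝ))
    (hmean : ∀ X ∈ L, ∫ ω, X ω = μ)
    (hstd : ∀ X ∈ L, variance X ℙ = σ ^ 2)
    (X₀ : Ω → ℝ) (hX₀ : X₀ ∈ L)
    (hba : BddAbove (ρ '' L)) (hbb : BddBelow (ρ '' L))
    (hne : sInf (ρ '' L) ≠ sSup (ρ '' L))
    (hpos : 0 < ρ X₀) (hpos' : 0 < ρ (fun ω => (X₀ ω - μ) / σ)) :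
    (sSup (ρ '' L) - ρ X₀) / (sSup (ρ '' L) - sInf (ρ '' L)) =
      (sSup (ρ '' ((fun X : Ω → ℝ => fun ω => (X ω - μ) / σ) '' L)) -
          ρ (fun ω => (X₀ ω - μ) / σ)) /
        (sSup (ρ '' ((fun X : Ω → ℝ => fun ω => (X ω - μ) / σ) '' L)) -
          sInf (ρ '' ((fun X : Ω → ℝ => fun ω => (X ω - μ) / σ) '' L))) := by
  have hσ' : (σ:ℝ) ≠ 0 := ne_of_gt hσ
  have key : ∀ X : Ω → ℝ, ρ (fun ω => (X ω - μ) / σ) = ρ X / σ + μ / σ := by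
    intro X
    have h1 : (fun ω => (X ω - μ) / σ) = fun ω => (1/σ) * X ω + (-(μ/σ)) := by
      funext ω; field_simp; ring
    rw [h1, htrans, hhom _ (by positivity)]; ring
  have himg : ρ '' ((fun X : Ω → ℝ => fun ω => (X ω - μ) / σ) '' L)
      = (fun r : ℝ => r / σ + μ / σ) '' (ρ '' L) := by
    rw [Set.image_image, Set.image_image]
    exact Set.image_congr' key
  have hmono : Monotone (fun r : ℝ => r / σ + μ / σ) := by
    intro a b h
    have := (div_le_div_iff_of_pos_right hσ).mpr h
    dsimp; linarith
  have hcont : Continuous (fun r : ℝ => r / σ + μ / σ) :=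
    (continuous_id.div_const σ).add continuous_const
  have hneL : (ρ '' L).Nonempty := ⟨ρ X₀, ⟨X₀, hX₀, rfl⟩⟩
  have hS : sSup ((fun r : ℝ => r / σ + μ / σ) '' (ρ '' L)) = sSup (ρ '' L) / σ + μ / σ :=
    (hmono.map_csSup_of_continuousAt hcont.continuousAt hneL hba).symm
  have hI : sInf ((fun r : ℝ => r / σ + μ / σ) '' (ρ '' L)) = sInf (ρ '' L) / σ + μ / σ :=
    (hmono.map_csInf_of_continuousAt hcont.continuousAt hneL hbb).symm
  rw [himg, hS, hI, key]
  have hd : sSup (ρ '' L) - sInf (ρ '' L) ≠ 0 := sub_ne_zero.mpr (Ne.symm hne)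
  field_simp
  rw [eq_div_iff (by contrapose! hd; linarith)]; ring
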